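/- arXiv:2605.09526 — 2 statements merged into one kernel-verified Lean document; each statement's English description precedes it below -/
import Mathlib

section
/- Let b ∈ ℝ and let V and V′ be two refined volume families, both satisfying the initial conditions and both satisfying the volume recursion at every (g,n,L) with 2g−2+n > 1 and L ∈ (0,∞)^n. Then V = V′, i.e., V_{g,n}(L) = V′_{g,n}(L) for all stable (g,n) and all L ∈ [0,∞)^n. -/
open scoped BigOperators

noncomputable section

/-- The ramp function `[x]₊ = max x 0`. -/
def ramp (x : ℝ) : ℝ := max x 0

/-- The kernel `𝓡(L₁, L_m, p)`. -/
def kerR (L1 Lm p : ℝ) : ℝ :=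
  (1 / (2 * L1)) * (ramp (L1 + Lm - p) - ramp (-L1 + Lm - p) + ramp (L1 - Lm - p))

/-- The kernel `𝓔(L₁, p)`. -/
def kerE (L1 p : ℝ) : ℝ := (1 / (2 * L1)) * ramp (L1 - p)

/-- The kernel `𝓓(L₁, p, q)`. -/
def kerD (L1 p q : ℝ) : ℝ := (1 / L1) * ramp (L1 - p - q)

/-- The sublist of entries of `L` whose (0-based) index lies in `S`, in order. -/
def selectIdxs {α : Type*} (L : List α) (S : Finset ℕ) : List α :=
  L.zipIdx.filterMap fun p => if p.2 ∈ S then some p.1 else none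

/-- The sublist of entries of `L` whose (0-based) index does not lie in `S`, in order. -/
def removeIdxs {α : Type*} (L : List α) (S : Finset ℕ) : List α :=
  L.zipIdx.filterMap fun p => if p.2 ∈ S then none else some p.1

/-- A refined lattice family is indexed by `h = 2g ∈ ℤ` and a tuple of boundary lengths
(a list); by convention it vanishes when `g < 0` or `2g - 2 + n ≤ 0`. -/
def ZeroConvention (N : ℤ → List ℤ → ℝ) : Prop :=
  ∀ (h : ℤ) (L : List ℤ), h < 0 ∨ h + (L.length : ℤ) ≤ 2 → N h L = 0

/-- The family vanishes on tuples of positive integers with odd sum. -/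
def ParitySupported (N : ℤ → List ℤ → ℝ) : Prop :=
  ∀ (h : ℤ) (L : List ℤ), (∀ x ∈ L, 0 < x) → ¬ Even L.sum → N h L = 0

/-- The initial conditions for `N_{0,3}`, `N_{1/2,2}` and `N_{1,1}` (recall `h = 2g`). -/
def InitialConditions (b : ℝ) (N : ℤ → List ℤ → ℝ) : Prop :=
  (∀ L1 L2 L3 : ℤ, 0 < L1 → 0 < L2 → 0 < L3 →
    N 0 [L1, L2, L3] = (1 + (-1 : ℝ) ^ (L1 + L2 + L3)) / 2 * (1 / 2)) ∧
  (∀ L1 L2 : ℤ, 0 < L1 → 0 < L2 →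
    N 1 [L1, L2] = (1 + (-1 : ℝ) ^ (L1 + L2)) / 2 *
      (b * (((max L1 L2 : ℤ) : ℝ) - 1) / 4)) ∧
  (∀ L1 : ℤ, 0 < L1 →
    N 2 [L1] = (1 + (-1 : ℝ) ^ L1) / 2 *
      (((1 + b) * ((L1 : ℝ) ^ 2 - 4) +
        b ^ 2 * (5 * (L1 : ℝ) ^ 2 - 12 * (L1 : ℝ) + 4)) / 96))

/-- The asymmetric recursion at `(g, n, L)` with `h = 2g`, `L = L₁ :: T`, `n = 1 + T.length`.
All sums over `p, q ∈ ℤ_{>0}` are finite because the kernels vanish for large `p, q`;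
they are written here as sums up to the corresponding vanishing threshold. -/
def AsymRecAt (b : ℝ) (N : ℤ → List ℤ → ℝ) (h : ℤ) (L1 : ℤ) (T : List ℤ) : Prop :=
  N h (L1 :: T) =
    (∑ m ∈ Finset.range T.length, ∑ p ∈ Finset.Icc 1 (L1 + T.getD m 0),
        (p : ℝ) * kerR (L1 : ℝ) ((T.getD m 0 : ℤ) : ℝ) (p : ℝ) * N h (p :: T.eraseIdx m))
    + b * (∑ p ∈ Finset.Icc 1 L1,
        (p : ℝ) * ((L1 : ℝ) - 1) * kerE (L1 : ℝ) (p : ℝ) * N (h - 1) (p :: T))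
    + ∑ p ∈ Finset.Icc 1 L1, ∑ q ∈ Finset.Icc 1 L1,
        (p : ℝ) * (q : ℝ) * kerD (L1 : ℝ) (p : ℝ) (q : ℝ) *
          (((1 + b) / 2) * N (h - 2) (p :: q :: T)
            + ∑ h1 ∈ Finset.Icc 0 h, ∑ S ∈ (Finset.range T.length).powerset,
                N h1 (p :: selectIdxs T S) * N (h - h1) (q :: removeIdxs T S))

/-- The family satisfies the asymmetric recursion at every `(g, n, L)` with
`2g - 2 + n > 1`, `L ∈ (ℤ_{>0})ⁿ` and `L₁ + ⋯ + L_n` even. -/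
def AsymRecursion (b : ℝ) (N : ℤ → List ℤ → ℝ) : Prop :=
  ∀ (h : ℤ) (L1 : ℤ) (T : List ℤ), 0 < L1 → (∀ x ∈ T, 0 < x) →
    3 < h + (1 + (T.length : ℤ)) → Even (L1 + T.sum) → AsymRecAt b N h L1 T

/-- The symmetric recursion at `(g, n, L)` with `h = 2g`. -/
def SymRecAt (b : ℝ) (N : ℤ → List ℤ → ℝ) (h : ℤ) (L : List ℤ) : Prop :=
  2 * (L.sum : ℝ) * N h L =
    (∑ i ∈ Finset.range L.length, ∑ j ∈ (Finset.range L.length).erase i,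
        ∑ p ∈ Finset.Icc 1 (L.getD i 0 + L.getD j 0),
          (p : ℝ) * ramp (((L.getD i 0 : ℤ) : ℝ) + ((L.getD j 0 : ℤ) : ℝ) - (p : ℝ)) *
            N h (p :: removeIdxs L {i, j}))
    + b * (∑ i ∈ Finset.range L.length, ∑ p ∈ Finset.Icc 1 (L.getD i 0),
        (p : ℝ) * (((L.getD i 0 : ℤ) : ℝ) - 1) *
          ramp (((L.getD i 0 : ℤ) : ℝ) - (p : ℝ)) * N (h - 1) (p :: removeIdxs L {i}))
    + ∑ i ∈ Finset.range L.length, ∑ p ∈ Finset.Icc 1 (L.getD i 0),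
        ∑ q ∈ Finset.Icc 1 (L.getD i 0),
          (p : ℝ) * (q : ℝ) * ramp (((L.getD i 0 : ℤ) : ℝ) - (p : ℝ) - (q : ℝ)) *
            ((1 + b) * N (h - 2) (p :: q :: removeIdxs L {i})
              + 2 * ∑ h1 ∈ Finset.Icc 0 h,
                  ∑ S ∈ ((Finset.range L.length).erase i).powerset,
                    N h1 (p :: selectIdxs L S) *
                      N (h - h1) (q :: selectIdxs L (((Finset.range L.length).erase i) \ S)))


open MeasureTheory

/-- A refined volume family is indexed by `h = 2g ∈ ℤ` and a tuple of boundary lengths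
(a list of reals); by convention it vanishes when `g < 0` or `2g - 2 + n ≤ 0`. -/
def VolZeroConvention (V : ℤ → List ℝ → ℝ) : Prop :=
  ∀ (h : ℤ) (L : List ℝ), h < 0 ∨ h + (L.length : ℤ) ≤ 2 → V h L = 0

/-- Each `V_{g,n}` is a continuous function on `[0,∞)ⁿ`. -/
def VolContinuous (V : ℤ → List ℝ → ℝ) : Prop :=
  ∀ (h : ℤ) (n : ℕ),
    ContinuousOn (fun x : Fin n → ℝ => V h (List.ofFn x)) {x | ∀ i, 0 ≤ x i}

/-- The initial conditions for `V_{0,3}`, `V_{1/2,2}` and `V_{1,1}` (recall `h = 2g`). -/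
def VolInitialConditions (b : ℝ) (V : ℤ → List ℝ → ℝ) : Prop :=
  (∀ L1 L2 L3 : ℝ, 0 ≤ L1 → 0 ≤ L2 → 0 ≤ L3 → V 0 [L1, L2, L3] = 1 / 2) ∧
  (∀ L1 L2 : ℝ, 0 ≤ L1 → 0 ≤ L2 → V 1 [L1, L2] = b * max L1 L2 / 4) ∧
  (∀ L1 : ℝ, 0 ≤ L1 → V 2 [L1] = L1 ^ 2 * (1 + b + 5 * b ^ 2) / 96)

/-- The volume recursion at `(g, n, L)` with `h = 2g`, `L = L₁ :: T`, `n = 1 + T.length`.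
All integrals are effectively over finite intervals since the kernels vanish for `p`
(respectively `p + q`) large. -/
def VolRecAt (b : ℝ) (V : ℤ → List ℝ → ℝ) (h : ℤ) (L1 : ℝ) (T : List ℝ) : Prop :=
  V h (L1 :: T) =
    (∑ m ∈ Finset.range T.length, ∫ p in Set.Ioi (0 : ℝ),
        p * kerR L1 (T.getD m 0) p * V h (p :: T.eraseIdx m))
    + b * (∫ p in Set.Ioi (0 : ℝ),
        p * L1 * kerE L1 p * V (h - 1) (p :: T))
    + ∫ p in Set.Ioi (0 : ℝ), ∫ q in Set.Ioi (0 : ℝ),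
        p * q * kerD L1 p q *
          (((1 + b) / 2) * V (h - 2) (p :: q :: T)
            + ∑ h1 ∈ Finset.Icc 0 h, ∑ S ∈ (Finset.range T.length).powerset,
                V h1 (p :: selectIdxs T S) * V (h - h1) (q :: removeIdxs T S))

/-- The family satisfies the volume recursion at every `(g, n, L)` with
`2g - 2 + n > 1` and `L ∈ (0,∞)ⁿ`. -/
def VolRecursion (b : ℝ) (V : ℤ → List ℝ → ℝ) : Prop :=
  ∀ (h : ℤ) (L1 : ℝ) (T : List ℝ), 0 < L1 → (∀ x ∈ T, 0 < x) →
    3 < h + (1 + (T.length : ℤ)) → VolRecAt b V h L1 T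


open MeasureTheory Filter Topology in
lemma mem_selectIdxs' {α : Type*} {L : List α} {S : Finset ℕ} {a : α}
    (h : a ∈ selectIdxs L S) : a ∈ L := by
  simp only [selectIdxs, List.mem_filterMap] at h
  obtain ⟨p, hp, he⟩ := h
  split at he
  · exact (Option.some_inj.mp he) ▸ List.fst_mem_of_mem_zipIdx hp
  · simp at he

lemma mem_removeIdxs' {α : Type*} {L : List α} {S : Finset ℕ} {a : α}
    (h : a ∈ removeIdxs L S) : a ∈ L := by
  simp only [removeIdxs, List.mem_filterMap] at h
  obtain ⟨p, hp, he⟩ := h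
  split at he
  · simp at he
  · exact (Option.some_inj.mp he) ▸ List.fst_mem_of_mem_zipIdx hp

lemma sel_rem_length {α : Type*} (L : List α) (S : Finset ℕ) :
    (selectIdxs L S).length + (removeIdxs L S).length = L.length := by
  rw [selectIdxs, removeIdxs, ← List.length_zipIdx (l := L) (i := 0)]
  induction L.zipIdx with
  | nil => simp
  | cons a l ih =>
    by_cases h : a.2 ∈ S <;> simp only [List.filterMap_cons, h, if_pos, if_neg,
      ite_true, ite_false, List.length_cons] <;> omega

open MeasureTheory Filter Topology in
lemma ext_on_nonneg {n : ℕ} {f g : (Fin n → ℝ) → ℝ}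
    (hf : ContinuousOn f {x | ∀ i, 0 ≤ x i}) (hg : ContinuousOn g {x | ∀ i, 0 ≤ x i})
    (hfg : ∀ x, (∀ i, 0 < x i) → f x = g x) :
    ∀ x, (∀ i, 0 ≤ x i) → f x = g x := by
  intro x hx
  have hxmem : x ∈ {x : Fin n → ℝ | ∀ i, 0 ≤ x i} := hx
  set y : ℕ → Fin n → ℝ := fun k i => x i + 1/((k:ℝ)+1) with hy
  have hpos : ∀ k i, 0 < y k i := by
    intro k i
    have h1 : (0:ℝ) < 1/((k:ℝ)+1) := by positivity
    have := hx i
    simp only [hy]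
    linarith
  have hlim : Tendsto y atTop (𝓝 x) := by
    rw [tendsto_pi_nhds]
    intro i
    have h2 : Tendsto (fun k : ℕ => x i + 1/((k:ℝ)+1)) atTop (𝓝 (x i + 0)) :=
      tendsto_const_nhds.add tendsto_one_div_add_atTop_nhds_zero_nat
    simp only [add_zero] at h2
    exact h2
  have hlim' : Tendsto y atTop (𝓝[{x : Fin n → ℝ | ∀ i, 0 ≤ x i}] x) := by
    apply tendsto_nhdsWithin_of_tendsto_nhds_of_eventually_within _ hlim
    exact Filter.Eventually.of_forall fun k => fun i => (hpos k i).le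
  have h1 : Tendsto (fun k => f (y k)) atTop (𝓝 (f x)) := Tendsto.comp (hf x hxmem) hlim'
  have h2 : Tendsto (fun k => g (y k)) atTop (𝓝 (g x)) := Tendsto.comp (hg x hxmem) hlim'
  have he : (fun k => f (y k)) = fun k => g (y k) := funext fun k => hfg _ (hpos k)
  exact tendsto_nhds_unique (he ▸ h1) h2

open MeasureTheory in
lemma volRec_unique_aux (b : ℝ) (V V' : ℤ → List ℝ → ℝ)
    (hzero : VolZeroConvention V) (hzero' : VolZeroConvention V')
    (hcont : VolContinuous V) (hcont' : VolContinuous V')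
    (hinit : VolInitialConditions b V) (hinit' : VolInitialConditions b V')
    (hrec : VolRecursion b V) (hrec' : VolRecursion b V') :
    ∀ (k : ℕ) (h : ℤ) (L1 : ℝ) (T : List ℝ), 0 ≤ L1 → (∀ x ∈ T, 0 ≤ x) →
      h + 1 + (T.length : ℤ) ≤ (k : ℤ) → V h (L1 :: T) = V' h (L1 :: T) := by
  intro k
  induction k using Nat.strong_induction_on with
  | _ k IH =>
  intro h L1 T hL1 hT hk
  by_cases hneg : h < 0
  · rw [hzero _ _ (Or.inl hneg), hzero' _ _ (Or.inl hneg)]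
  push_neg at hneg
  by_cases hsmall : h + ((L1 :: T).length : ℤ) ≤ 2
  · rw [hzero _ _ (Or.inr hsmall), hzero' _ _ (Or.inr hsmall)]
  push_neg at hsmall
  have hlen1 : ((L1 :: T).length : ℤ) = (T.length : ℤ) + 1 := by simp
  rw [hlen1] at hsmall
  by_cases hbase : h + 1 + (T.length : ℤ) = 3
  · have hcases : (h = 0 ∧ T.length = 2) ∨ (h = 1 ∧ T.length = 1) ∨
        (h = 2 ∧ T.length = 0) := by omega
    rcases hcases with ⟨rfl, ht⟩ | ⟨rfl, ht⟩ | ⟨rfl, ht⟩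
    · obtain ⟨a, c, rfl⟩ := List.length_eq_two.mp ht
      rw [hinit.1 L1 a c hL1 (hT a (by simp)) (hT c (by simp)),
          hinit'.1 L1 a c hL1 (hT a (by simp)) (hT c (by simp))]
    · obtain ⟨a, rfl⟩ := List.length_eq_one_iff.mp ht
      rw [hinit.2.1 L1 a hL1 (hT a (by simp)), hinit'.2.1 L1 a hL1 (hT a (by simp))]
    · have : T = [] := List.length_eq_zero_iff.mp ht
      subst this
      rw [hinit.2.2 L1 hL1, hinit'.2.2 L1 hL1]
  · have hrec3 : 3 < h + (1 + (T.length : ℤ)) := by omega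
    have IH' : ∀ (h' : ℤ) (M1 : ℝ) (M : List ℝ), 0 ≤ M1 → (∀ x ∈ M, 0 ≤ x) →
        h' + 1 + (M.length : ℤ) ≤ h + (T.length : ℤ) → V h' (M1 :: M) = V' h' (M1 :: M) := by
      intro h' M1 M hM1 hM hle
      exact IH (k-1) (by omega) h' M1 M hM1 hM (by omega)
    have hpos : ∀ (M1 : ℝ) (M : List ℝ), 0 < M1 → (∀ x ∈ M, 0 < x) →
        M.length = T.length → V h (M1 :: M) = V' h (M1 :: M) := by
      intro M1 M hM1 hM hMlen
      have r1 := hrec h M1 M hM1 hM (by rw [hMlen]; exact hrec3)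
      have r2 := hrec' h M1 M hM1 hM (by rw [hMlen]; exact hrec3)
      rw [VolRecAt] at r1 r2
      rw [r1, r2]
      have hM' : ∀ x ∈ M, 0 ≤ x := fun x hx => (hM x hx).le
      congr 1
      congr 1
      · apply Finset.sum_congr rfl
        intro m hm
        apply setIntegral_congr_fun measurableSet_Ioi
        intro p hp
        dsimp only
        have hm' : m < M.length := Finset.mem_range.mp hm
        have hplen : (M.eraseIdx m).length = M.length - 1 := by
          rw [List.length_eraseIdx, if_pos hm']
        rw [IH' h p (M.eraseIdx m) (le_of_lt hp)
            (fun x hx => hM' x (List.mem_of_mem_eraseIdx hx))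
            (by rw [hplen]; omega)]
      · congr 1
        apply setIntegral_congr_fun measurableSet_Ioi
        intro p hp
        dsimp only
        rw [IH' (h-1) p M (le_of_lt hp) hM' (by rw [hMlen]; omega)]
      · apply setIntegral_congr_fun measurableSet_Ioi
        intro p hp
        apply setIntegral_congr_fun measurableSet_Ioi
        intro q hq
        dsimp only
        have hp' : (0:ℝ) < p := hp
        have hq' : (0:ℝ) < q := hq
        congr 1
        congr 1
        · congr 1
          rw [IH' (h-2) p (q :: M) hp'.le
              (by intro x hx; rcases List.mem_cons.mp hx with rfl | hx
                  exacts [hq'.le, hM' x hx])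
              (by simp only [List.length_cons]; push_cast; omega)]
        · apply Finset.sum_congr rfl
          intro h1 hh1
          apply Finset.sum_congr rfl
          intro S hS
          rw [Finset.mem_Icc] at hh1
          have hsl := sel_rem_length M S
          by_cases hc1 : h1 + 1 + ((selectIdxs M S).length : ℤ) ≤ h + (T.length : ℤ)
          · by_cases hc2 : (h - h1) + 1 + ((removeIdxs M S).length : ℤ) ≤ h + (T.length : ℤ)
            · rw [IH' h1 p _ hp'.le (fun x hx => hM' x (mem_selectIdxs' hx)) hc1,
                  IH' (h-h1) q _ hq'.le (fun x hx => hM' x (mem_removeIdxs' hx)) hc2]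
            · have hzc : h1 + (((p :: selectIdxs M S)).length : ℤ) ≤ 2 := by
                simp only [List.length_cons]; push_cast; omega
              rw [hzero h1 _ (Or.inr hzc), hzero' h1 _ (Or.inr hzc), zero_mul, zero_mul]
          · have hzc : (h - h1) + (((q :: removeIdxs M S)).length : ℤ) ≤ 2 := by
              simp only [List.length_cons]; push_cast; omega
            rw [hzero (h-h1) _ (Or.inr hzc), hzero' (h-h1) _ (Or.inr hzc),
               mul_zero, mul_zero]
    have hall : ∀ x ∈ L1 :: T, 0 ≤ x := by
      intro x hx
      rcases List.mem_cons.mp hx with rfl | hx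
      exacts [hL1, hT x hx]
    have hkey : ∀ x : Fin (T.length + 1) → ℝ, (∀ i, 0 ≤ x i) →
        V h (List.ofFn x) = V' h (List.ofFn x) := by
      apply ext_on_nonneg (hcont h _) (hcont' h _)
      intro x hx
      rw [List.ofFn_succ]
      apply hpos
      · exact hx 0
      · intro y hy
        obtain ⟨i, rfl⟩ := List.mem_ofFn.mp hy
        exact hx _
      · simp
    have hfin := hkey (L1 :: T).get (fun i => hall _ (List.get_mem _ _))
    rwa [List.ofFn_get] at hfin

/-- Two refined volume families satisfying the initial conditions and
the volume recursion agree on all stable `(g,n)` and all of `[0,∞)ⁿ`. -/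
theorem volRec_unique (b : ℝ) (V V' : ℤ → List ℝ → ℝ)
    (hzero : VolZeroConvention V) (hzero' : VolZeroConvention V')
    (hcont : VolContinuous V) (hcont' : VolContinuous V')
    (hinit : VolInitialConditions b V) (hinit' : VolInitialConditions b V')
    (hrec : VolRecursion b V) (hrec' : VolRecursion b V') :
    ∀ (h : ℤ) (L : List ℝ), (∀ x ∈ L, 0 ≤ x) → 0 < L.length →
      2 < h + (L.length : ℤ) → V h L = V' h L := by
  intro h L hL hlen hcomp
  obtain ⟨L1, T, rfl⟩ : ∃ a t, L = a :: t := by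
    cases L with
    | nil => simp at hlen
    | cons a t => exact ⟨a, t, rfl⟩
  simp only [List.length_cons] at hcomp
  exact volRec_unique_aux b V V' hzero hzero' hcont hcont' hinit hinit' hrec hrec'
    (h + 1 + T.length).toNat h L1 T (hL _ (by simp))
    (fun x hx => hL x (by simp [hx])) (by push_cast at hcomp ⊢; omega)

end
end

section
/- Let b ∈ ℝ and let V be a refined volume family satisfying the initial conditions and the volume recursion at every (g,n,L) with 2g−2+n > 1 and L ∈ (0,∞)^n. Then every V_{g,n} is homogeneous of degree 6g−6+2n: for every stable pair (g,n), every c > 0, and every L ∈ (0,∞)^n, V_{g,n}(cL₁,…,cL_n) = c^{6g−6+2n}·V_{g,n}(L₁,…,L_n). -/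
open scoped BigOperators

noncomputable section

open MeasureTheory

section AuxHomog

open Set MeasureTheory

lemma ramp_mul {c : ℝ} (hc : 0 ≤ c) (x : ℝ) : ramp (c * x) = c * ramp x := by
  unfold ramp
  rcases le_total x 0 with hx | hx
  · rw [max_eq_right (mul_nonpos_of_nonneg_of_nonpos hc hx), max_eq_right hx, mul_zero]
  · rw [max_eq_left (mul_nonneg hc hx), max_eq_left hx]

lemma kerR_mul {c : ℝ} (hc : 0 < c) {L1 : ℝ} (hL1 : L1 ≠ 0) (Lm p : ℝ) :
    kerR (c * L1) (c * Lm) (c * p) = kerR L1 Lm p := by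
  unfold kerR
  rw [show c * L1 + c * Lm - c * p = c * (L1 + Lm - p) by ring,
    show -(c * L1) + c * Lm - c * p = c * (-L1 + Lm - p) by ring,
    show c * L1 - c * Lm - c * p = c * (L1 - Lm - p) by ring,
    ramp_mul hc.le, ramp_mul hc.le, ramp_mul hc.le]
  field_simp

lemma kerE_mul {c : ℝ} (hc : 0 < c) {L1 : ℝ} (hL1 : L1 ≠ 0) (p : ℝ) :
    kerE (c * L1) (c * p) = kerE L1 p := by
  unfold kerE
  rw [show c * L1 - c * p = c * (L1 - p) by ring, ramp_mul hc.le]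
  field_simp

lemma kerD_mul {c : ℝ} (hc : 0 < c) {L1 : ℝ} (hL1 : L1 ≠ 0) (p q : ℝ) :
    kerD (c * L1) (c * p) (c * q) = kerD L1 p q := by
  unfold kerD
  rw [show c * L1 - c * p - c * q = c * (L1 - p - q) by ring, ramp_mul hc.le]
  field_simp

lemma enumFrom_map_filterMap_some {α β : Type*} (f : α → β) (S : Finset ℕ) :
    ∀ (l : List α) (i : ℕ),
      ((l.map f).zipIdx i).filterMap (fun p => if p.2 ∈ S then some p.1 else none) =
        ((l.zipIdx i).filterMap (fun p => if p.2 ∈ S then some p.1 else none)).map f := by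
  intro l
  induction l with
  | nil => intro i; rfl
  | cons a t ih =>
    intro i
    simp only [List.map_cons, List.zipIdx_cons, List.filterMap_cons]
    by_cases hi : i ∈ S
    · simp [hi, ih (i + 1)]
    · simp [hi, ih (i + 1)]

lemma enumFrom_map_filterMap_none {α β : Type*} (f : α → β) (S : Finset ℕ) :
    ∀ (l : List α) (i : ℕ),
      ((l.map f).zipIdx i).filterMap (fun p => if p.2 ∈ S then none else some p.1) =
        ((l.zipIdx i).filterMap (fun p => if p.2 ∈ S then none else some p.1)).map f := by
  intro l
  induction l with
  | nil => intro i; rfl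
  | cons a t ih =>
    intro i
    simp only [List.map_cons, List.zipIdx_cons, List.filterMap_cons]
    by_cases hi : i ∈ S
    · simp [hi, ih (i + 1)]
    · simp [hi, ih (i + 1)]

lemma selectIdxs_map (c : ℝ) (T : List ℝ) (S : Finset ℕ) :
    selectIdxs (T.map fun x => c * x) S = (selectIdxs T S).map fun x => c * x := by
  unfold selectIdxs
  exact enumFrom_map_filterMap_some _ S T 0

lemma removeIdxs_map (c : ℝ) (T : List ℝ) (S : Finset ℕ) :
    removeIdxs (T.map fun x => c * x) S = (removeIdxs T S).map fun x => c * x := by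
  unfold removeIdxs
  exact enumFrom_map_filterMap_none _ S T 0

lemma filterMap_ite_length {α : Type*} (S : Finset ℕ) :
    ∀ l : List (α × ℕ),
      (l.filterMap fun p => if p.2 ∈ S then some p.1 else none).length +
        (l.filterMap fun p => if p.2 ∈ S then none else some p.1).length = l.length := by
  intro l
  induction l with
  | nil => rfl
  | cons a t ih =>
    simp only [List.filterMap_cons]
    by_cases hi : a.2 ∈ S <;> simp [hi] <;> omega

lemma selectIdxs_length_add {α : Type*} (T : List α) (S : Finset ℕ) :
    (selectIdxs T S).length + (removeIdxs T S).length = T.length := by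
  unfold selectIdxs removeIdxs
  rw [filterMap_ite_length S T.zipIdx, List.length_zipIdx]

lemma snd_mem_of_mem_enumFrom {α : Type*} :
    ∀ (l : List α) (i : ℕ) (p : α × ℕ), p ∈ l.zipIdx i → p.1 ∈ l := by
  intro l
  induction l with
  | nil => intro i p hp; simp at hp
  | cons a t ih =>
    intro i p hp
    rw [List.zipIdx_cons, List.mem_cons] at hp
    rcases hp with rfl | hp
    · exact List.mem_cons_self
    · exact List.mem_cons_of_mem _ (ih (i + 1) p hp)

lemma mem_of_mem_selectIdxs {α : Type*} {T : List α} {S : Finset ℕ} {x : α}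
    (hx : x ∈ selectIdxs T S) : x ∈ T := by
  unfold selectIdxs at hx
  rcases List.mem_filterMap.1 hx with ⟨p, hp, hps⟩
  have hm := snd_mem_of_mem_enumFrom T 0 p hp
  split at hps
  · obtain rfl := Option.some.inj hps; exact hm
  · exact absurd hps (by simp)

lemma mem_of_mem_removeIdxs {α : Type*} {T : List α} {S : Finset ℕ} {x : α}
    (hx : x ∈ removeIdxs T S) : x ∈ T := by
  unfold removeIdxs at hx
  rcases List.mem_filterMap.1 hx with ⟨p, hp, hps⟩
  have hm := snd_mem_of_mem_enumFrom T 0 p hp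
  split at hps
  · exact absurd hps (by simp)
  · obtain rfl := Option.some.inj hps; exact hm

lemma integral_Ioi_scale (f : ℝ → ℝ) {c : ℝ} (hc : 0 < c) :
    ∫ x in Ioi (0:ℝ), f x = c * ∫ x in Ioi (0:ℝ), f (c * x) := by
  rw [MeasureTheory.integral_comp_mul_left_Ioi f 0 hc, mul_zero, smul_eq_mul,
    ← mul_assoc, mul_inv_cancel₀ hc.ne', one_mul]

lemma map_eraseIdx' {α β : Type*} (f : α → β) :
    ∀ (l : List α) (m : ℕ), (l.map f).eraseIdx m = (l.eraseIdx m).map f := by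
  intro l
  induction l with
  | nil => intro m; rfl
  | cons a t ih =>
    intro m
    cases m with
    | zero => rfl
    | succ m => simp only [List.map_cons, List.eraseIdx_cons_succ, ih m]

lemma mem_of_mem_eraseIdx' {α : Type*} :
    ∀ (l : List α) (m : ℕ) (x : α), x ∈ l.eraseIdx m → x ∈ l := by
  intro l
  induction l with
  | nil => intro m x hx; simp [List.eraseIdx] at hx
  | cons a t ih =>
    intro m x hx
    cases m with
    | zero => exact List.mem_cons_of_mem _ hx
    | succ m =>
      rw [List.eraseIdx_cons_succ, List.mem_cons] at hx
      rcases hx with rfl | hx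
      · exact List.mem_cons_self
      · exact List.mem_cons_of_mem _ (ih m x hx)

lemma getD_map_mul {c : ℝ} {T : List ℝ} {m : ℕ} (hm : m < T.length) :
    (T.map fun x => c * x).getD m 0 = c * T.getD m 0 := by
  rw [List.getD_eq_getElem _ 0 (by simpa using hm), List.getD_eq_getElem _ 0 hm,
    List.getElem_map]

lemma max_mul_left' {c a b : ℝ} (hc : 0 ≤ c) : max (c * a) (c * b) = c * max a b := by
  rcases le_total a b with hab | hab
  · rw [max_eq_right hab, max_eq_right (mul_le_mul_of_nonneg_left hab hc)]
  · rw [max_eq_left hab, max_eq_left (mul_le_mul_of_nonneg_left hab hc)]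

lemma key_homog (b : ℝ) (V : ℤ → List ℝ → ℝ) (hzero : VolZeroConvention V)
    (hinit : VolInitialConditions b V) (hrec : VolRecursion b V) :
    ∀ (k : ℕ) (h : ℤ) (L : List ℝ), L ≠ [] → (∀ x ∈ L, 0 < x) →
      h + (L.length : ℤ) ≤ (k : ℤ) → ∀ c : ℝ, 0 < c →
      V h (L.map fun x => c * x) = c ^ (3 * h + 2 * (L.length : ℤ) - 6) * V h L := by
  intro k
  induction k with
  | zero =>
    intro h L hne hpos hk c hc
    rw [hzero h _ (Or.inr (by rw [List.length_map]; omega)),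
      hzero h L (Or.inr (by omega)), mul_zero]
  | succ k IH =>
    intro h L hne hpos hk c hc
    rcases lt_or_ge h 0 with hneg | h0
    · rw [hzero h _ (Or.inl hneg), hzero h L (Or.inl hneg), mul_zero]
    rcases le_or_gt (h + (L.length : ℤ)) 2 with hsmall | hbig
    · rw [hzero h _ (Or.inr (by rw [List.length_map]; omega)),
        hzero h L (Or.inr hsmall), mul_zero]
    rcases eq_or_lt_of_le (show (3 : ℤ) ≤ h + (L.length : ℤ) by omega) with heq3 | hge4
    · -- initial cases : h + n = 3
      rcases L with _ | ⟨a1, L⟩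
      · exact absurd rfl hne
      rcases L with _ | ⟨a2, L⟩
      · -- L = [a1], h = 2
        have h2 : h = 2 := by simp only [List.length_cons, List.length_nil] at heq3; omega
        have ha1 : 0 < a1 := hpos a1 (List.mem_cons_self)
        simp only [List.map_cons, List.map_nil]
        rw [h2, hinit.2.2 (c * a1) (by positivity), hinit.2.2 a1 ha1.le,
          show (3 * (2:ℤ) + 2 * (([a1].length : ℕ) : ℤ) - 6) = ((2:ℕ) : ℤ) by
            simp only [List.length_cons, List.length_nil]; norm_num,
          zpow_natCast]
        ring
      rcases L with _ | ⟨a3, L⟩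
      · -- L = [a1, a2], h = 1
        have h1 : h = 1 := by simp only [List.length_cons, List.length_nil] at heq3; omega
        have ha1 : 0 < a1 := hpos a1 (by simp)
        have ha2 : 0 < a2 := hpos a2 (by simp)
        simp only [List.map_cons, List.map_nil]
        rw [h1, hinit.2.1 (c * a1) (c * a2) (by positivity) (by positivity),
          hinit.2.1 a1 a2 ha1.le ha2.le, max_mul_left' hc.le,
          show (3 * (1:ℤ) + 2 * (([a1, a2].length : ℕ) : ℤ) - 6) = ((1:ℕ) : ℤ) by
            simp only [List.length_cons, List.length_nil]; norm_num,
          zpow_natCast, pow_one]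
        ring
      · -- L = [a1, a2, a3], h = 0
        have hLlen : L.length = 0 := by simp only [List.length_cons] at heq3; omega
        obtain rfl := List.length_eq_zero_iff.mp hLlen
        have h00 : h = 0 := by simp only [List.length_cons, List.length_nil] at heq3; omega
        have ha1 : 0 < a1 := hpos a1 (by simp)
        have ha2 : 0 < a2 := hpos a2 (by simp)
        have ha3 : 0 < a3 := hpos a3 (by simp)
        simp only [List.map_cons, List.map_nil]
        rw [h00, hinit.1 (c * a1) (c * a2) (c * a3) (by positivity) (by positivity)
            (by positivity), hinit.1 a1 a2 a3 ha1.le ha2.le ha3.le,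
          show (3 * (0:ℤ) + 2 * (([a1, a2, a3].length : ℕ) : ℤ) - 6) = ((0:ℕ) : ℤ) by
            simp only [List.length_cons, List.length_nil]; norm_num,
          zpow_natCast, pow_zero, one_mul]
    · -- recursive case : h + n ≥ 4
      rcases L with _ | ⟨L1, T⟩
      · exact absurd rfl hne
      have hL1 : 0 < L1 := hpos L1 (List.mem_cons_self)
      have hT : ∀ x ∈ T, 0 < x := fun x hx => hpos x (List.mem_cons_of_mem _ hx)
      have hk' : h + (T.length : ℤ) ≤ (k : ℤ) := by
        simp only [List.length_cons] at hk; push_cast at hk; omega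
      have hge4' : (4 : ℤ) ≤ h + 1 + (T.length : ℤ) := by
        simp only [List.length_cons] at hge4; push_cast at hge4; omega
      have hrec1 := hrec h L1 T hL1 hT (by omega)
      have hrec2 := hrec h (c * L1) (T.map fun x => c * x) (by positivity)
        (fun x hx => by
          rcases List.mem_map.1 hx with ⟨y, hy, rfl⟩; exact mul_pos hc (hT y hy))
        (by rw [List.length_map]; omega)
      unfold VolRecAt at hrec1 hrec2
      -- term A
      have keyA : ∀ m ∈ Finset.range T.length,
          (∫ p in Ioi (0:ℝ), p * kerR (c * L1) ((T.map fun x => c * x).getD m 0) p *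
              V h (p :: (T.map fun x => c * x).eraseIdx m))
          = c ^ (3 * h + 2 * (T.length : ℤ) - 4) *
            ∫ p in Ioi (0:ℝ), p * kerR L1 (T.getD m 0) p * V h (p :: T.eraseIdx m) := by
        intro m hm
        have hmlt : m < T.length := Finset.mem_range.1 hm
        have hEl : (T.eraseIdx m).length + 1 = T.length := List.length_eraseIdx_add_one hmlt
        rw [getD_map_mul hmlt, map_eraseIdx']
        rw [integral_Ioi_scale _ hc]
        have hcongr : Set.EqOn
            (fun x => (fun p => p * kerR (c * L1) (c * T.getD m 0) p *
              V h (p :: (T.eraseIdx m).map fun y => c * y)) (c * x))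
            (fun x => (c * c ^ (3 * h + 2 * (T.length : ℤ) - 6)) *
              (x * kerR L1 (T.getD m 0) x * V h (x :: T.eraseIdx m))) (Ioi 0) := by
          intro x hx
          have hx0 : (0:ℝ) < x := hx
          have hIH := IH h (x :: T.eraseIdx m) (by simp)
            (by intro y hy
                rcases List.mem_cons.1 hy with rfl | hy
                · exact hx0
                · exact hT y (mem_of_mem_eraseIdx' T m y hy))
            (by simp only [List.length_cons]; push_cast; omega) c hc
          simp only [List.map_cons] at hIH
          show (c * x) * kerR (c * L1) (c * T.getD m 0) (c * x) *
              V h ((c * x) :: (T.eraseIdx m).map fun y => c * y) = _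
          rw [kerR_mul hc hL1.ne', hIH,
            show (3 * h + 2 * (((x :: T.eraseIdx m).length : ℕ) : ℤ) - 6)
                = 3 * h + 2 * (T.length : ℤ) - 6 by
              simp only [List.length_cons]; push_cast; omega]
          ring
        rw [setIntegral_congr_fun measurableSet_Ioi hcongr, MeasureTheory.integral_const_mul,
          show c ^ (3 * h + 2 * (T.length : ℤ) - 4)
              = c * (c * c ^ (3 * h + 2 * (T.length : ℤ) - 6)) by
            rw [show (3 * h + 2 * (T.length : ℤ) - 4)
                = 1 + (1 + (3 * h + 2 * (T.length : ℤ) - 6)) by ring,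
              zpow_add₀ hc.ne', zpow_add₀ hc.ne', zpow_one]]
        ring
      have keyA' : (∑ m ∈ Finset.range T.length,
            ∫ p in Ioi (0:ℝ), p * kerR (c * L1) ((T.map fun x => c * x).getD m 0) p *
              V h (p :: (T.map fun x => c * x).eraseIdx m))
          = c ^ (3 * h + 2 * (T.length : ℤ) - 4) *
            ∑ m ∈ Finset.range T.length,
              ∫ p in Ioi (0:ℝ), p * kerR L1 (T.getD m 0) p * V h (p :: T.eraseIdx m) := by
        rw [Finset.mul_sum]; exact Finset.sum_congr rfl keyA
      -- term B
      have keyB : (∫ p in Ioi (0:ℝ), p * (c * L1) * kerE (c * L1) p *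
            V (h - 1) (p :: T.map fun x => c * x))
          = c ^ (3 * h + 2 * (T.length : ℤ) - 4) *
            ∫ p in Ioi (0:ℝ), p * L1 * kerE L1 p * V (h - 1) (p :: T) := by
        rw [integral_Ioi_scale _ hc]
        have hcongr : Set.EqOn
            (fun x => (fun p => p * (c * L1) * kerE (c * L1) p *
              V (h - 1) (p :: T.map fun y => c * y)) (c * x))
            (fun x => (c * (c * c ^ (3 * h + 2 * (T.length : ℤ) - 7))) *
              (x * L1 * kerE L1 x * V (h - 1) (x :: T))) (Ioi 0) := by
          intro x hx
          have hx0 : (0:ℝ) < x := hx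
          have hIH := IH (h - 1) (x :: T) (by simp)
            (by intro y hy
                rcases List.mem_cons.1 hy with rfl | hy
                · exact hx0
                · exact hT y hy)
            (by simp only [List.length_cons]; push_cast; omega) c hc
          simp only [List.map_cons] at hIH
          show (c * x) * (c * L1) * kerE (c * L1) (c * x) *
              V (h - 1) ((c * x) :: T.map fun y => c * y) = _
          rw [kerE_mul hc hL1.ne', hIH,
            show (3 * (h - 1) + 2 * (((x :: T).length : ℕ) : ℤ) - 6)
                = 3 * h + 2 * (T.length : ℤ) - 7 by
              simp only [List.length_cons]; push_cast; ring]
          ring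
        rw [setIntegral_congr_fun measurableSet_Ioi hcongr, MeasureTheory.integral_const_mul,
          show c ^ (3 * h + 2 * (T.length : ℤ) - 4)
              = c * (c * (c * c ^ (3 * h + 2 * (T.length : ℤ) - 7))) by
            rw [show (3 * h + 2 * (T.length : ℤ) - 4)
                = 1 + (1 + (1 + (3 * h + 2 * (T.length : ℤ) - 7))) by ring,
              zpow_add₀ hc.ne', zpow_add₀ hc.ne', zpow_add₀ hc.ne', zpow_one]]
        ring
      -- the scaled bracket in term C
      have keyW : ∀ p q : ℝ, 0 < p → 0 < q →
          ((1 + b) / 2 * V (h - 2) ((c * p) :: (c * q) :: T.map fun x => c * x)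
            + ∑ h1 ∈ Finset.Icc 0 h, ∑ S ∈ (Finset.range T.length).powerset,
                V h1 ((c * p) :: (selectIdxs T S).map fun x => c * x) *
                  V (h - h1) ((c * q) :: (removeIdxs T S).map fun x => c * x))
          = c ^ (3 * h + 2 * (T.length : ℤ) - 8) *
            ((1 + b) / 2 * V (h - 2) (p :: q :: T)
              + ∑ h1 ∈ Finset.Icc 0 h, ∑ S ∈ (Finset.range T.length).powerset,
                  V h1 (p :: selectIdxs T S) * V (h - h1) (q :: removeIdxs T S)) := by
        intro p q hp hq
        have h1main : V (h - 2) ((c * p) :: (c * q) :: T.map fun x => c * x)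
            = c ^ (3 * h + 2 * (T.length : ℤ) - 8) * V (h - 2) (p :: q :: T) := by
          have hIH := IH (h - 2) (p :: q :: T) (by simp)
            (by intro y hy
                rcases List.mem_cons.1 hy with rfl | hy
                · exact hp
                rcases List.mem_cons.1 hy with rfl | hy
                · exact hq
                · exact hT y hy)
            (by simp only [List.length_cons]; push_cast; omega) c hc
          simp only [List.map_cons] at hIH
          rw [hIH, show (3 * (h - 2) + 2 * (((p :: q :: T).length : ℕ) : ℤ) - 6)
              = 3 * h + 2 * (T.length : ℤ) - 8 by
            simp only [List.length_cons]; push_cast; ring]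
        have hsum : ∀ h1 ∈ Finset.Icc 0 h, ∀ S ∈ (Finset.range T.length).powerset,
            V h1 ((c * p) :: (selectIdxs T S).map fun x => c * x) *
              V (h - h1) ((c * q) :: (removeIdxs T S).map fun x => c * x)
            = c ^ (3 * h + 2 * (T.length : ℤ) - 8) *
              (V h1 (p :: selectIdxs T S) * V (h - h1) (q :: removeIdxs T S)) := by
          intro h1 hh1 S hS
          have hlen12 : (selectIdxs T S).length + (removeIdxs T S).length = T.length :=
            selectIdxs_length_add T S
          by_cases hz1 : h1 + (1 + ((selectIdxs T S).length : ℤ)) ≤ 2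
          · rw [hzero h1 _ (Or.inr (by
                simp only [List.length_cons, List.length_map]; push_cast; omega)),
              hzero h1 _ (Or.inr (by simp only [List.length_cons]; push_cast; omega)),
              zero_mul, zero_mul, mul_zero]
          by_cases hz2 : (h - h1) + (1 + ((removeIdxs T S).length : ℤ)) ≤ 2
          · rw [hzero (h - h1) _ (Or.inr (by
                simp only [List.length_cons, List.length_map]; push_cast; omega)),
              hzero (h - h1) _ (Or.inr (by simp only [List.length_cons]; push_cast; omega)),
              mul_zero, mul_zero, mul_zero]
          · have hIH1 := IH h1 (p :: selectIdxs T S) (by simp)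
              (by intro y hy
                  rcases List.mem_cons.1 hy with rfl | hy
                  · exact hp
                  · exact hT y (mem_of_mem_selectIdxs hy))
              (by simp only [List.length_cons]; push_cast; omega) c hc
            have hIH2 := IH (h - h1) (q :: removeIdxs T S) (by simp)
              (by intro y hy
                  rcases List.mem_cons.1 hy with rfl | hy
                  · exact hq
                  · exact hT y (mem_of_mem_removeIdxs hy))
              (by simp only [List.length_cons]; push_cast; omega) c hc
            simp only [List.map_cons] at hIH1 hIH2
            rw [hIH1, hIH2, mul_mul_mul_comm, ← zpow_add₀ hc.ne',
              show (3 * h1 + 2 * (((p :: selectIdxs T S).length : ℕ) : ℤ) - 6)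
                  + (3 * (h - h1) + 2 * (((q :: removeIdxs T S).length : ℕ) : ℤ) - 6)
                  = 3 * h + 2 * (T.length : ℤ) - 8 by
                simp only [List.length_cons]; push_cast; omega]
        rw [h1main]
        have hsum' : (∑ h1 ∈ Finset.Icc 0 h, ∑ S ∈ (Finset.range T.length).powerset,
            V h1 ((c * p) :: (selectIdxs T S).map fun x => c * x) *
              V (h - h1) ((c * q) :: (removeIdxs T S).map fun x => c * x))
          = c ^ (3 * h + 2 * (T.length : ℤ) - 8) *
            ∑ h1 ∈ Finset.Icc 0 h, ∑ S ∈ (Finset.range T.length).powerset,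
              V h1 (p :: selectIdxs T S) * V (h - h1) (q :: removeIdxs T S) := by
          rw [Finset.mul_sum]
          refine Finset.sum_congr rfl fun h1 hh1 => ?_
          rw [Finset.mul_sum]
          exact Finset.sum_congr rfl fun S hS => hsum h1 hh1 S hS
        rw [hsum']
        ring
      -- term C
      have keyC : (∫ p in Ioi (0:ℝ), ∫ q in Ioi (0:ℝ), p * q * kerD (c * L1) p q *
            ((1 + b) / 2 * V (h - 2) (p :: q :: T.map fun x => c * x)
              + ∑ h1 ∈ Finset.Icc 0 h,
                  ∑ S ∈ (Finset.range T.length).powerset,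
                    V h1 (p :: selectIdxs (T.map fun x => c * x) S) *
                      V (h - h1) (q :: removeIdxs (T.map fun x => c * x) S)))
          = c ^ (3 * h + 2 * (T.length : ℤ) - 4) *
            ∫ p in Ioi (0:ℝ), ∫ q in Ioi (0:ℝ), p * q * kerD L1 p q *
              ((1 + b) / 2 * V (h - 2) (p :: q :: T)
                + ∑ h1 ∈ Finset.Icc 0 h, ∑ S ∈ (Finset.range T.length).powerset,
                    V h1 (p :: selectIdxs T S) * V (h - h1) (q :: removeIdxs T S)) := by
        simp only [selectIdxs_map, removeIdxs_map]
        rw [integral_Ioi_scale _ hc]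
        have hout : Set.EqOn
            (fun x => (fun p => ∫ q in Ioi (0:ℝ), p * q * kerD (c * L1) p q *
              ((1 + b) / 2 * V (h - 2) (p :: q :: T.map fun y => c * y)
                + ∑ h1 ∈ Finset.Icc 0 h, ∑ S ∈ (Finset.range T.length).powerset,
                    V h1 (p :: (selectIdxs T S).map fun y => c * y) *
                      V (h - h1) (q :: (removeIdxs T S).map fun y => c * y))) (c * x))
            (fun x => (c * (c * (c * c ^ (3 * h + 2 * (T.length : ℤ) - 8)))) *
              ∫ q in Ioi (0:ℝ), x * q * kerD L1 x q *
                ((1 + b) / 2 * V (h - 2) (x :: q :: T)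
                  + ∑ h1 ∈ Finset.Icc 0 h, ∑ S ∈ (Finset.range T.length).powerset,
                      V h1 (x :: selectIdxs T S) * V (h - h1) (q :: removeIdxs T S)))
            (Ioi 0) := by
          intro p hp
          have hp0 : (0:ℝ) < p := hp
          show (∫ q in Ioi (0:ℝ), (c * p) * q * kerD (c * L1) (c * p) q *
              ((1 + b) / 2 * V (h - 2) ((c * p) :: q :: T.map fun y => c * y)
                + ∑ h1 ∈ Finset.Icc 0 h, ∑ S ∈ (Finset.range T.length).powerset,
                    V h1 ((c * p) :: (selectIdxs T S).map fun y => c * y) *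
                      V (h - h1) (q :: (removeIdxs T S).map fun y => c * y))) = _
          rw [integral_Ioi_scale _ hc]
          have hin : Set.EqOn
              (fun y => (fun q => (c * p) * q * kerD (c * L1) (c * p) q *
                ((1 + b) / 2 * V (h - 2) ((c * p) :: q :: T.map fun z => c * z)
                  + ∑ h1 ∈ Finset.Icc 0 h, ∑ S ∈ (Finset.range T.length).powerset,
                      V h1 ((c * p) :: (selectIdxs T S).map fun z => c * z) *
                        V (h - h1) (q :: (removeIdxs T S).map fun z => c * z))) (c * y))
              (fun y => (c * (c * c ^ (3 * h + 2 * (T.length : ℤ) - 8))) *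
                (p * y * kerD L1 p y *
                  ((1 + b) / 2 * V (h - 2) (p :: y :: T)
                    + ∑ h1 ∈ Finset.Icc 0 h, ∑ S ∈ (Finset.range T.length).powerset,
                        V h1 (p :: selectIdxs T S) * V (h - h1) (y :: removeIdxs T S))))
              (Ioi 0) := by
            intro q hq
            have hq0 : (0:ℝ) < q := hq
            show (c * p) * (c * q) * kerD (c * L1) (c * p) (c * q) *
                ((1 + b) / 2 * V (h - 2) ((c * p) :: (c * q) :: T.map fun z => c * z)
                  + ∑ h1 ∈ Finset.Icc 0 h, ∑ S ∈ (Finset.range T.length).powerset,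
                      V h1 ((c * p) :: (selectIdxs T S).map fun z => c * z) *
                        V (h - h1) ((c * q) :: (removeIdxs T S).map fun z => c * z)) = _
            rw [kerD_mul hc hL1.ne', keyW p q hp0 hq0]
            ring
          rw [setIntegral_congr_fun measurableSet_Ioi hin, MeasureTheory.integral_const_mul]
          ring
        rw [setIntegral_congr_fun measurableSet_Ioi hout, MeasureTheory.integral_const_mul,
          show c ^ (3 * h + 2 * (T.length : ℤ) - 4)
              = c * (c * (c * (c * c ^ (3 * h + 2 * (T.length : ℤ) - 8)))) by
            rw [show (3 * h + 2 * (T.length : ℤ) - 4)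
                = 1 + (1 + (1 + (1 + (3 * h + 2 * (T.length : ℤ) - 8)))) by ring,
              zpow_add₀ hc.ne', zpow_add₀ hc.ne', zpow_add₀ hc.ne', zpow_add₀ hc.ne',
              zpow_one]]
        ring
      -- assemble
      simp only [List.map_cons]
      rw [hrec2, hrec1]
      simp only [List.length_map]
      rw [keyA', keyB, keyC,
        show (3 * h + 2 * (((L1 :: T).length : ℕ) : ℤ) - 6)
            = 3 * h + 2 * (T.length : ℤ) - 4 by
          simp only [List.length_cons]; push_cast; ring]
      ring

end AuxHomog

/-- A refined volume family satisfying the initial conditions and the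
volume recursion is homogeneous of degree `6g - 6 + 2n` (i.e. `3h + 2n - 6` with
`h = 2g`) on the positive orthant. -/
theorem vol_homogeneous (b : ℝ) (V : ℤ → List ℝ → ℝ)
    (hzero : VolZeroConvention V) (hcont : VolContinuous V)
    (hinit : VolInitialConditions b V) (hrec : VolRecursion b V) :
    ∀ (h : ℤ) (L : List ℝ), 0 < L.length → 2 < h + (L.length : ℤ) →
      ∀ c : ℝ, 0 < c → (∀ x ∈ L, 0 < x) →
        V h (L.map fun x => c * x) =
          c ^ (3 * h + 2 * (L.length : ℤ) - 6) * V h L := by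
  intro h L hlen hbig c hc hpos
  exact key_homog b V hzero hinit hrec (h + (L.length : ℤ)).toNat h L
    (List.length_pos_iff.mp hlen) hpos (Int.self_le_toNat _) c hc

end
end
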